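/- The only triples (x, y, c) of integers with x ≥ 1, y ≥ 1, and 2^x - 3^y = c with |c| ≤ 10 are (2,1,1), (1,1,-1), (3,2,-1), (3,1,5), (5,3,5), (2,2,-5), (4,2,7), (1,2,-7). In particular, if x > 5 or y > 3, then |2^x - 3^y| > 10. -/
import Mathlib

set_option maxRecDepth 10000 in
lemma herschfeld_key_comp : ∀ a < 216, ∀ b < 16,
    10 < (64 * 2^a + (88128 - 81 * 3^b % 88128)) % 88128 ∧
    (64 * 2^a + (88128 - 81 * 3^b % 88128)) % 88128 < 88118 := by decide

lemma herschfeld_pow2_mod (s : ℕ) : (2:ℕ)^(6+s) ≡ 64 * 2^(s % 216) [MOD 88128] := by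
  have h1 : (2:ℕ)^s ≡ 2^(s % 216) [MOD 1377] := by
    conv_lhs => rw [← Nat.div_add_mod s 216]
    rw [pow_add, pow_mul]
    have h : (2:ℕ)^216 ≡ 1 [MOD 1377] := by decide
    calc ((2:ℕ)^216)^(s/216) * 2^(s%216)
        ≡ 1^(s/216) * 2^(s%216) [MOD 1377] := (h.pow _).mul_right _
      _ = 2^(s%216) := by rw [one_pow, one_mul]
  have h2 := Nat.ModEq.mul_left' (c := 64) h1
  have e : (2:ℕ)^(6+s) = 64 * 2^s := by rw [pow_add]; norm_num
  rw [e]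
  exact h2

lemma herschfeld_pow3_mod (t : ℕ) : (3:ℕ)^(4+t) ≡ 81 * 3^(t % 16) [MOD 88128] := by
  have h1 : (3:ℕ)^t ≡ 3^(t % 16) [MOD 1088] := by
    conv_lhs => rw [← Nat.div_add_mod t 16]
    rw [pow_add, pow_mul]
    have h : (3:ℕ)^16 ≡ 1 [MOD 1088] := by decide
    calc ((3:ℕ)^16)^(t/16) * 3^(t%16)
        ≡ 1^(t/16) * 3^(t%16) [MOD 1088] := (h.pow _).mul_right _
      _ = 3^(t%16) := by rw [one_pow, one_mul]
  have h2 := Nat.ModEq.mul_left' (c := 81) h1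
  have e : (3:ℕ)^(4+t) = 81 * 3^t := by rw [pow_add]; norm_num
  rw [e]
  exact h2

lemma herschfeld_big (x y : ℕ) (hx : 6 ≤ x) (hy : 4 ≤ y) :
    10 < |(2:ℤ)^x - 3^y| := by
  by_contra h
  push_neg at h
  rw [abs_le] at h
  obtain ⟨hl, hr⟩ := h
  obtain ⟨s, rfl⟩ := Nat.exists_eq_add_of_le hx
  obtain ⟨t, rfl⟩ := Nat.exists_eq_add_of_le hy
  have hA := herschfeld_pow2_mod s
  have hB := herschfeld_pow3_mod t
  have hK := herschfeld_key_comp (s % 216) (Nat.mod_lt s (by norm_num)) (t % 16)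
    (Nat.mod_lt t (by norm_num))
  have e2 : (2:ℤ)^(6+s) = ((2^(6+s) : ℕ) : ℤ) := by push_cast; ring
  have e3 : (3:ℤ)^(4+t) = ((3^(4+t) : ℕ) : ℤ) := by push_cast; ring
  rw [e2, e3] at hl hr
  unfold Nat.ModEq at hA hB
  generalize (2:ℕ)^(6+s) = u at hA hl hr
  generalize (3:ℕ)^(4+t) = v at hB hl hr
  generalize (2:ℕ)^(s % 216) = p at hA hK
  generalize (3:ℕ)^(t % 16) = q at hB hK
  have hA' : (u:ℤ) % 88128 = (64*(p:ℤ)) % 88128 := by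
    have h := congrArg (Nat.cast : ℕ → ℤ) hA; push_cast at h; exact h
  have hB' : (v:ℤ) % 88128 = (81*(q:ℤ)) % 88128 := by
    have h := congrArg (Nat.cast : ℕ → ℤ) hB; push_cast at h; exact h
  have hsub : ((u:ℤ) - v) % 88128 = (64*(p:ℤ) - 81*q) % 88128 := Int.ModEq.sub hA' hB'
  have hval : (64*(p:ℤ) - 81*q) % 88128
      = ((64 * p + (88128 - 81 * q % 88128)) % 88128 : ℕ) := by omega
  rw [hval] at hsub
  have hcases : ((u:ℤ) - v) % 88128 = (u:ℤ) - v ∨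
      ((u:ℤ) - v) % 88128 = (u:ℤ) - v + 88128 := by omega
  rcases hcases with hc1 | hc1 <;> rw [hc1] at hsub <;> omega

theorem herschfeld_small_c :
    (∀ (x y : ℕ) (c : ℤ), 1 ≤ x → 1 ≤ y → (2 : ℤ)^x - 3^y = c → |c| ≤ 10 →
      ((x, y, c) = (2, 1, 1) ∨ (x, y, c) = (1, 1, -1) ∨ (x, y, c) = (3, 2, -1) ∨
        (x, y, c) = (3, 1, 5) ∨ (x, y, c) = (5, 3, 5) ∨ (x, y, c) = (2, 2, -5) ∨
        (x, y, c) = (4, 2, 7) ∨ (x, y, c) = (1, 2, -7))) ∧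
    (∀ x y : ℕ, 1 ≤ x → 1 ≤ y → (5 < x ∨ 3 < y) → 10 < |(2 : ℤ)^x - 3^y|) := by
  have part2 : ∀ x y : ℕ, 1 ≤ x → 1 ≤ y → (5 < x ∨ 3 < y) → 10 < |(2 : ℤ)^x - 3^y| := by
    intro x y hx hy hbig
    by_cases hx6 : 6 ≤ x
    · by_cases hy4 : 4 ≤ y
      · exact herschfeld_big x y hx6 hy4
      · -- y ≤ 3, x ≥ 6 : 2^x ≥ 64, 3^y ≤ 27
        push_neg at hy4
        have h1 : (2:ℤ)^6 ≤ 2^x := pow_le_pow_right₀ (by norm_num) hx6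
        have h2 : (3:ℤ)^y ≤ 3^3 := pow_le_pow_right₀ (by norm_num) (by omega)
        have : (10:ℤ) < (2:ℤ)^x - 3^y := by norm_num at h1 h2 ⊢; omega
        calc (10:ℤ) < (2:ℤ)^x - 3^y := this
          _ ≤ |(2:ℤ)^x - 3^y| := le_abs_self _
    · -- x ≤ 5, so 3 < y, 3^y ≥ 81, 2^x ≤ 32
      push_neg at hx6
      have hy4 : 4 ≤ y := by omega
      have h1 : (2:ℤ)^x ≤ 2^5 := pow_le_pow_right₀ (by norm_num) (by omega)
      have h2 : (3:ℤ)^4 ≤ 3^y := pow_le_pow_right₀ (by norm_num) hy4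
      have : (10:ℤ) < -((2:ℤ)^x - 3^y) := by norm_num at h1 h2 ⊢; omega
      calc (10:ℤ) < -((2:ℤ)^x - 3^y) := this
        _ ≤ |(2:ℤ)^x - 3^y| := neg_le_abs _
  refine ⟨?_, part2⟩
  intro x y c hx hy hc habs
  by_cases hbig : 5 < x ∨ 3 < y
  · exact absurd habs (by rw [← hc] at habs ⊢; exact not_le.mpr (part2 x y hx hy hbig))
  · push_neg at hbig
    obtain ⟨hx5, hy3⟩ := hbig
    interval_cases x <;> interval_cases y <;>
      (norm_num at hc; subst hc) <;> simp [Prod.ext_iff] at habs ⊢
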